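/- arXiv:2409.00389 — 6 statements merged into one kernel-verified Lean document; each statement's English description precedes it below -/
import Mathlib

section
/- Let D be a class of small categories. Then D is weakly sound if and only if every small D-cocomplete category is D-filtered. -/
open CategoryTheory CategoryTheory.Limits Opposite

universe w v u

namespace Paper

/-- The `M`-weighted colimit functor, sending `F : C ⥤ Type` to the conical colimit of
`F ∘ π` over the (opposite of the Mathlib) category of elements of `M`. -/
noncomputable def weightedColimF {C : Type u} [Category.{0} C] (M : Cᵒᵖ ⥤ Type)
    (h : HasColimitsOfShape (M.Elements)ᵒᵖ (Type 0)) : (C ⥤ Type) ⥤ Type :=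
  letI := h
  (Functor.whiskeringLeft (M.Elements)ᵒᵖ C (Type 0)).obj (CategoryOfElements.π M).leftOp ⋙ colim

/-- A weight `M : Cᵒᵖ ⥤ Type` is `D`-flat if `M`-weighted colimits commute in `Type`
with limits of shape `J` for every `J ∈ D`. -/
def DFlat (D : Set Cat.{0,0}) {C : Type u} [Category.{0} C] (M : Cᵒᵖ ⥤ Type) : Prop :=
  ∃ h : HasColimitsOfShape (M.Elements)ᵒᵖ (Type 0),
    ∀ J : Cat.{0,0}, J ∈ D → Nonempty (PreservesLimitsOfShape ↥J (weightedColimF M h))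

/-- A category is `D`-cocomplete if it has colimits of shape `J` for every `J ∈ D`. -/
def DCocomplete (D : Set Cat.{0,0}) (C : Type u) [Category.{0} C] : Prop :=
  ∀ J : Cat.{0,0}, J ∈ D → HasColimitsOfShape ↥J C

/-- A category is `D`-complete if it has limits of shape `J` for every `J ∈ D`. -/
def DComplete (D : Set Cat.{0,0}) (C : Type u) [Category.{0} C] : Prop :=
  ∀ J : Cat.{0,0}, J ∈ D → HasLimitsOfShape ↥J C

/-- A small category `C` is `D`-filtered if the colimit functor `(C ⥤ Type) ⥤ Type`
preserves limits of shape `J` for every `J ∈ D`. -/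
def DFiltered (D : Set Cat.{0,0}) (C : Type) [SmallCategory C] : Prop :=
  ∀ J : Cat.{0,0}, J ∈ D →
    Nonempty (PreservesLimitsOfShape ↥J (colim : (C ⥤ Type) ⥤ Type))

/-- `M : Cᵒᵖ ⥤ Type` sends colimits of `D`-shaped diagrams in `C` to limits in `Type`;
equivalently, it preserves limits of shape `Jᵒᵖ` for every `J ∈ D`. -/
def DContinuous (D : Set Cat.{0,0}) {C : Type u} [Category.{0} C] (M : Cᵒᵖ ⥤ Type) : Prop :=
  ∀ J : Cat.{0,0}, J ∈ D → Nonempty (PreservesLimitsOfShape (↥J)ᵒᵖ M)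

/-- `D` is weakly sound if every presheaf on a small `D`-cocomplete category sending
`D`-shaped colimits to limits is `D`-flat. -/
def WeaklySound (D : Set Cat.{0,0}) : Prop :=
  ∀ (C : Type) [SmallCategory C], DCocomplete D C →
    ∀ M : Cᵒᵖ ⥤ Type, DContinuous D M → DFlat D M

/-- An object `X` is `D`-presentable if `Hom(X, -)` preserves colimits of all
`D`-filtered shapes. -/
def DPresentable (D : Set Cat.{0,0}) {K : Type u} [Category.{0} K] (X : K) : Prop :=
  ∀ (C : Type) [SmallCategory C], DFiltered D C →
    Nonempty (PreservesColimitsOfShape C (coyoneda.obj (op X)))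

/-- The restricted Yoneda functor `K ⥤ (Gᵒᵖ ⥤ Type)` associated to a set of objects `G`. -/
noncomputable def restrictedYoneda {K : Type u} [Category.{0} K] (G : Set K) :
    K ⥤ ((ObjectProperty.FullSubcategory fun X : K => X ∈ G)ᵒᵖ ⥤ Type) :=
  yoneda ⋙ (Functor.whiskeringLeft _ _ _).obj (ObjectProperty.ι fun X : K => X ∈ G).op

/-- `G` is a strong generator: the restricted Yoneda functor is conservative. -/
def IsStrongGenerator {K : Type u} [Category.{0} K] (G : Set K) : Prop :=
  (restrictedYoneda G).ReflectsIsomorphisms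

/-- `K` is locally `D`-presentable: cocomplete with a small strong generator consisting
of `D`-presentable objects. -/
def LocallyDPresentable (D : Set Cat.{0,0}) (K : Type u) [Category.{0} K] : Prop :=
  HasColimits K ∧
    ∃ G : Set K, Small.{0} (↥G) ∧ (∀ X ∈ G, DPresentable D X) ∧ IsStrongGenerator G

/-- `K` is `D`-accessible: it has colimits of all `D`-filtered shapes and a small family of
`D`-presentable objects such that every object is a `D`-filtered colimit of objects there. -/
def DAccessible (D : Set Cat.{0,0}) (K : Type u) [Category.{0} K] : Prop :=
  (∀ (C : Type) [SmallCategory C], DFiltered D C → HasColimitsOfShape C K) ∧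
  ∃ S : Set K, Small.{0} (↥S) ∧ (∀ X ∈ S, DPresentable D X) ∧
    ∀ X : K, ∃ C : Cat.{0,0}, DFiltered D ↥C ∧
      ∃ H : ↥C ⥤ K, (∀ c : ↥C, H.obj c ∈ S) ∧
        ∃ cc : Cocone H, Nonempty (IsColimit cc) ∧ Nonempty (cc.pt ≅ X)

/-- The closure of a set of objects under colimits of `D`-shaped diagrams
(the smallest replete collection containing `S` and closed under such colimits). -/
inductive DShapeClos (D : Set Cat.{0,0}) {A : Type u} [Category.{0} A] (S : Set A) : A → Prop
  | of {X : A} : X ∈ S → DShapeClos D S X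
  | iso {X Y : A} (e : X ≅ Y) : DShapeClos D S X → DShapeClos D S Y
  | colim (J : Cat.{0,0}) (hJ : J ∈ D) (H : ↥J ⥤ A)
      (hH : ∀ j : ↥J, DShapeClos D S (H.obj j)) (c : Cocone H) (hc : IsColimit c) :
      DShapeClos D S c.pt

end Paper

namespace Paper

/-- The constant functor at `PUnit` preserves all limits. -/
lemma preservesLimitsOfShape_const_punit {A : Type u} [Category.{0} A]
    (J : Type) [SmallCategory J] :
    PreservesLimitsOfShape J ((Functor.const A).obj (PUnit : Type)) where
  preservesLimit {K} := ⟨fun {c} _ => ⟨{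
    lift := fun _ => TypeCat.ofHom (fun _ => PUnit.unit)
    fac := fun s j => by ext x; exact Subsingleton.elim (α := PUnit.{1}) _ _
    uniq := fun s m h => by ext x; exact Subsingleton.elim (α := PUnit.{1}) _ _ }⟩⟩

section ConstElements

variable {C : Type} [SmallCategory C]

/-- For the constant presheaf at `PUnit`, the projection out of the (opposite) category of
elements is an equivalence. -/
lemma isEquivalence_leftOp_pi_const :
    (CategoryOfElements.π ((Functor.const Cᵒᵖ).obj (PUnit : Type))).leftOp.IsEquivalence := by
  set M : Cᵒᵖ ⥤ Type := (Functor.const Cᵒᵖ).obj (PUnit : Type) with hM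
  constructor
  · constructor
    intro X Y f g h
    apply Quiver.Hom.unop_inj
    apply CategoryOfElements.ext
    exact Quiver.Hom.unop_inj h
  · constructor
    intro X Y g
    exact ⟨(CategoryOfElements.homMk Y.unop X.unop g.op
      (Subsingleton.elim (α := PUnit.{1}) _ _)).op, rfl⟩
  · constructor
    intro X
    exact ⟨op ⟨op X, PUnit.unit⟩, ⟨Iso.refl _⟩⟩

end ConstElements

/-- A class `D` of small categories is weakly sound if and only if
every small `D`-cocomplete category is `D`-filtered. -/
theorem weaklySound_iff_dCocomplete_dFiltered (D : Set Cat.{0,0}) :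
    WeaklySound D ↔
      ∀ (C : Type) [SmallCategory C], DCocomplete D C → DFiltered D C := by
  constructor
  · intro ws C _ hC
    set M : Cᵒᵖ ⥤ Type := (Functor.const Cᵒᵖ).obj (PUnit : Type) with hM
    have cont : DContinuous D M := fun J _ => ⟨preservesLimitsOfShape_const_punit _⟩
    obtain ⟨h, hp⟩ := ws C hC M cont
    intro J hJ
    obtain ⟨p⟩ := hp J hJ
    letI := h
    haveI : (CategoryOfElements.π M).leftOp.IsEquivalence := isEquivalence_leftOp_pi_const
    haveI : PreservesLimitsOfShape ↥J
        ((Functor.whiskeringLeft (M.Elements)ᵒᵖ C (Type 0)).obj (CategoryOfElements.π M).leftOp ⋙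
          colim) := p
    exact ⟨preservesLimitsOfShape_of_natIso
      (Functor.Final.colimIso (CategoryOfElements.π M).leftOp)⟩
  · intro hf C _ hC M cont
    have h : HasColimitsOfShape (M.Elements)ᵒᵖ (Type 0) := inferInstance
    refine ⟨h, fun J hJ => ?_⟩
    have hc : DCocomplete D (M.Elements)ᵒᵖ := by
      intro J' hJ'
      haveI : HasColimitsOfShape ↥J' C := hC J' hJ'
      haveI : HasColimitsOfShape (↥J')ᵒᵖᵒᵖ C :=
        hasColimitsOfShape_of_equivalence (opOpEquivalence ↥J').symm
      haveI : HasLimitsOfShape (↥J')ᵒᵖ Cᵒᵖ := hasLimitsOfShape_op_of_hasColimitsOfShape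
      haveI : PreservesLimitsOfShape (↥J')ᵒᵖ M := (cont J' hJ').some
      haveI : HasLimitsOfShape (↥J')ᵒᵖ M.Elements := inferInstance
      exact hasColimitsOfShape_op_of_hasLimitsOfShape
    obtain ⟨q⟩ := hf (M.Elements)ᵒᵖ hc J hJ
    have := q
    letI := h
    haveI := q
    exact ⟨comp_preservesLimitsOfShape
      ((Functor.whiskeringLeft (M.Elements)ᵒᵖ C (Type 0)).obj (CategoryOfElements.π M).leftOp) colim⟩

end Paper
end

section
/- Let D be a weakly sound class of small categories. If K is locally D-presentable, L is cocomplete, and F : L → K is a conservative functor that admits a left adjoint and preserves colimits of all D-filtered shapes, then L is locally D-presentable. -/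
open CategoryTheory CategoryTheory.Limits Opposite

universe w v u

namespace Paper

/-- If `D` is weakly sound, `K` is locally `D`-presentable, `L` is
cocomplete, and `F : L ⥤ K` is conservative, admits a left adjoint, and preserves colimits
of all `D`-filtered shapes, then `L` is locally `D`-presentable. -/
theorem locallyDPresentable_of_conservative_rightAdjoint (D : Set Cat.{0,0})
    (hD : WeaklySound D) (K : Type u) [Category.{0} K] (L : Type v) [Category.{0} L]
    (hK : LocallyDPresentable D K) (hL : HasColimits L)
    (F : L ⥤ K) (hcons : F.ReflectsIsomorphisms)
    (hadj : ∃ Ladj : K ⥤ L, Nonempty (Ladj ⊣ F))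
    (hpres : ∀ (C : Type) [SmallCategory C], DFiltered D C →
      Nonempty (PreservesColimitsOfShape C F)) :
    LocallyDPresentable D L := by
  obtain ⟨E, ⟨adj⟩⟩ := hadj
  obtain ⟨_, G, hGsmall, hGpres, hGgen⟩ := hK
  refine ⟨hL, E.obj '' G, inferInstance, ?_, ?_⟩
  · -- D-presentability of E.obj X for X ∈ G
    rintro Y ⟨X, hX, rfl⟩
    intro C _ hC
    obtain ⟨hFX⟩ := hpres C hC
    obtain ⟨hXp⟩ := hGpres X hX C hC
    -- coyoneda.obj (op (E.obj X)) ≅ F ⋙ coyoneda.obj (op X)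
    have e : coyoneda.obj (op (E.obj X)) ≅ F ⋙ coyoneda.obj (op X) :=
      NatIso.ofComponents (fun A => Equiv.toIso (adj.homEquiv X A))
        (by intro A B h; ext g;
            exact adj.homEquiv_naturality_right g h)
    have : PreservesColimitsOfShape C (F ⋙ coyoneda.obj (op X)) :=
      comp_preservesColimitsOfShape F (coyoneda.obj (op X))
    exact ⟨preservesColimitsOfShape_of_natIso e.symm⟩
  · -- strong generator
    unfold IsStrongGenerator
    constructor
    intro A B f hf
    -- show F.map f is iso via strong generation in K
    have hFf : IsIso ((restrictedYoneda G).map (F.map f)) := by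
      rw [NatTrans.isIso_iff_isIso_app]
      intro Xop
      obtain ⟨X⟩ := Xop
      rw [isIso_iff_bijective]
      have hmid : IsIso (((restrictedYoneda (E.obj '' G)).map f).app
          (op ⟨E.obj X.obj, ⟨X.obj, X.property, rfl⟩⟩)) := inferInstance
      have hmidb : Function.Bijective (fun (g : E.obj X.obj ⟶ A) => g ≫ f) :=
        (isIso_iff_bijective _).mp hmid
      have key : ⇑(((restrictedYoneda G).map (F.map f)).app (op X)) =
          (adj.homEquiv X.obj B) ∘ (fun (g : E.obj X.obj ⟶ A) => g ≫ f) ∘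
            (adj.homEquiv X.obj A).symm := by
        funext g
        show g ≫ F.map f = adj.homEquiv X.obj B ((adj.homEquiv X.obj A).symm g ≫ f)
        rw [adj.homEquiv_naturality_right]; erw [Equiv.apply_symm_apply]
      rw [key]
      exact (adj.homEquiv X.obj B).bijective.comp
        (hmidb.comp (adj.homEquiv X.obj A).symm.bijective)
    haveI : (restrictedYoneda G).ReflectsIsomorphisms := hGgen
    haveI : IsIso (F.map f) := isIso_of_reflects_iso (F.map f) (restrictedYoneda G)
    exact isIso_of_reflects_iso f F


end Paper
end

section
/- Let D be a weakly sound class of small categories, K a D-accessible category that is complete, and A a D-accessible category. Then the following are equivalent for a functor F : K → A: (1) F preserves all small limits and all colimits of D-filtered shapes; (2) F preserves colimits of all D-filtered shapes and admits a left adjoint; (3) F admits a left adjoint which sends D-presentable objects of A to D-presentable objects of K. -/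
open CategoryTheory CategoryTheory.Limits Opposite

universe w v u

namespace Paper

section Aux

/-- If every object of `A` is (iso to) the point of a colimit of a diagram valued in `S`,
and `f` becomes a bijection under `Hom(s, -)` for every `s ∈ S`, then `f` is an iso. -/
theorem isIso_of_bijective_on_gen {A : Type v} [Category.{0} A] (S : Set A)
    (pres : ∀ X : A, ∃ C : Cat.{0,0}, ∃ H : ↥C ⥤ A, (∀ c : ↥C, H.obj c ∈ S) ∧
      ∃ cc : Cocone H, Nonempty (IsColimit cc) ∧ Nonempty (cc.pt ≅ X))
    {X Y : A} (f : X ⟶ Y)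
    (hf : ∀ s, s ∈ S → Function.Bijective (fun g : s ⟶ X => g ≫ f)) :
    IsIso f := by
  obtain ⟨C, H, hS, cc, ⟨hc⟩, ⟨e⟩⟩ := pres Y
  have hsec : ∀ c : ↥C, ∃ g : H.obj c ⟶ X, g ≫ f = cc.ι.app c ≫ e.hom :=
    fun c => (hf _ (hS c)).2 _
  choose g hg using hsec
  have nat : ∀ {c c' : ↥C} (m : c ⟶ c'), H.map m ≫ g c' = g c := by
    intro c c' m
    apply (hf _ (hS c)).1
    show (H.map m ≫ g c') ≫ f = g c ≫ f
    rw [Category.assoc, hg, hg, ← Category.assoc, cc.w m]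
  let k : Cocone H := ⟨X, ⟨fun c => g c, fun {c c'} m => by simp [nat m]⟩⟩
  let q : Y ⟶ X := e.inv ≫ hc.desc k
  have hfacq : ∀ c, cc.ι.app c ≫ hc.desc k = g c := fun c => hc.fac k c
  have h1 : q ≫ f = 𝟙 Y := by
    have : hc.desc k ≫ f = e.hom := by
      apply hc.hom_ext
      intro c
      rw [← Category.assoc, hfacq, hg]
    simp only [q, Category.assoc, this, e.inv_hom_id]
  have h2 : f ≫ q = 𝟙 X := by
    obtain ⟨C2, H2, hS2, cc2, ⟨hc2⟩, ⟨e2⟩⟩ := pres X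
    have : e2.hom ≫ f ≫ q = e2.hom ≫ 𝟙 X := by
      apply hc2.hom_ext
      intro c
      apply (hf _ (hS2 c)).1
      show (cc2.ι.app c ≫ e2.hom ≫ f ≫ q) ≫ f = (cc2.ι.app c ≫ e2.hom ≫ 𝟙 X) ≫ f
      simp only [Category.assoc, h1, Category.comp_id, Category.id_comp]
    have := (Iso.cancel_iso_hom_left e2 _ _).1 this
    simpa using this
  exact ⟨q, h2, h1⟩

/-- `Hom(L X, -) ≅ Hom(X, F -)` for an adjunction `L ⊣ F`. -/
noncomputable def adjCoyonedaIso {K : Type u} [Category.{0} K] {A : Type v} [Category.{0} A]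
    {L : A ⥤ K} {F : K ⥤ A} (adj : L ⊣ F) (X : A) :
    coyoneda.obj (op (L.obj X)) ≅ F ⋙ coyoneda.obj (op X) :=
  NatIso.ofComponents (fun Y => Equiv.toIso (adj.homEquiv X Y)) (by
    intro Y Z φ
    ext g
    exact adj.homEquiv_naturality_right g φ)

variable {K : Type u} [Category.{0} K] {A : Type v} [Category.{0} A]

/-- A left adjoint of a `D`-filtered-colimit-preserving functor sends presentables to
presentables. -/
theorem dPresentable_leftAdjoint (D : Set Cat.{0,0}) {L : A ⥤ K} {F : K ⥤ A} (adj : L ⊣ F)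
    (hF : ∀ (C : Type) [SmallCategory C], DFiltered D C →
      Nonempty (PreservesColimitsOfShape C F))
    {X : A} (hX : DPresentable D X) : DPresentable D (L.obj X) := by
  intro C _ hC
  haveI := (hF C hC).some
  haveI := (hX C hC).some
  exact ⟨preservesColimitsOfShape_of_natIso (adjCoyonedaIso adj X).symm⟩

/-- If a right adjoint's left adjoint preserves presentables, the right adjoint preserves
`D`-filtered colimits. -/
theorem preservesColimitsOfShape_of_leftAdjoint (D : Set Cat.{0,0}) (hA : DAccessible D A)
    {L : A ⥤ K} {F : K ⥤ A} (adj : L ⊣ F)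
    (hL : ∀ X : A, DPresentable D X → DPresentable D (L.obj X))
    (C : Type) [SmallCategory C] (hC : DFiltered D C) :
    PreservesColimitsOfShape C F := by
  obtain ⟨S, -, hSpres, hScover⟩ := hA.2
  haveI : HasColimitsOfShape C A := hA.1 C hC
  constructor; intro H; constructor; intro c hc
  let d := colimit.cocone (H ⋙ F)
  have hd : IsColimit d := colimit.isColimit _
  let φ : d.pt ⟶ F.obj c.pt := hd.desc (F.mapCocone c)
  have hφ : IsIso φ := by
    apply isIso_of_bijective_on_gen S
    · intro X
      obtain ⟨C', h1, H', h2, cc, h3, h4⟩ := hScover X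
      exact ⟨C', H', h2, cc, h3, h4⟩
    · intro s hs
      haveI : PreservesColimitsOfShape C (coyoneda.obj (op s)) := (hSpres s hs C hC).some
      haveI : PreservesColimitsOfShape C (coyoneda.obj (op (L.obj s))) :=
        (hL s (hSpres s hs) C hC).some
      have h1 : IsColimit ((coyoneda.obj (op s)).mapCocone d) :=
        isColimitOfPreserves _ hd
      haveI : PreservesColimitsOfShape C (F ⋙ coyoneda.obj (op s)) :=
        preservesColimitsOfShape_of_natIso (adjCoyonedaIso adj s)
      have h2 : IsColimit ((coyoneda.obj (op s)).mapCocone (F.mapCocone c)) :=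
        isColimitOfPreserves (F ⋙ coyoneda.obj (op s)) hc
      have key : (coyoneda.obj (op s)).map φ = (h1.coconePointUniqueUpToIso h2).hom := by
        apply h1.hom_ext
        intro j
        rw [IsColimit.comp_coconePointUniqueUpToIso_hom]
        show (coyoneda.obj (op s)).map (d.ι.app j) ≫ (coyoneda.obj (op s)).map φ = _
        rw [← Functor.map_comp]
        have : d.ι.app j ≫ φ = (F.mapCocone c).ι.app j := hd.fac (F.mapCocone c) j
        rw [this]
        rfl
      have hbij : Function.Bijective ((coyoneda.obj (op s)).map φ) := by
        rw [key]
        exact (isIso_iff_bijective _).1 inferInstance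
      exact hbij
  exact ⟨@IsColimit.ofPointIso _ _ _ _ _ _ _ hd hφ⟩

end Aux

end Paper
namespace Paper
section Aux2

variable {K : Type u} [Category.{0} K] {A : Type v} [Category.{0} A]

/-- For a `D`-presentable object `s`, the comma category `s ↓ F` has an initial object,
provided `F` preserves limits and `D`-filtered colimits and `K` is `D`-accessible and
complete. -/
theorem hasInitial_structuredArrow_of_presentable (D : Set Cat.{0,0})
    (hK : DAccessible D K) [HasLimits K] {F : K ⥤ A} [PreservesLimits F]
    (hFc : ∀ (C : Type) [SmallCategory C], DFiltered D C →
      Nonempty (PreservesColimitsOfShape C F))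
    (s : A) (hs : DPresentable D s) : HasInitial (StructuredArrow s F) := by
  obtain ⟨SK, hsmall, hpresK, hcover⟩ := hK.2
  haveI := hsmall
  let ι' := Σ b : ↥SK, (s ⟶ F.obj b.1)
  haveI : Small.{0} ι' := inferInstance
  let eqv := equivShrink ι'
  let B : Shrink ι' → StructuredArrow s F := fun i => StructuredArrow.mk ((eqv.symm i).2)
  have hB : ∀ Z : StructuredArrow s F, ∃ i, Nonempty (B i ⟶ Z) := by
    intro Z
    obtain ⟨C, hfilt, H, hSH, cc, ⟨hcol⟩, ⟨e⟩⟩ := hcover Z.right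
    haveI := (hFc (↥C) hfilt).some
    haveI := (hs (↥C) hfilt).some
    have hcolF : IsColimit (F.mapCocone cc) := isColimitOfPreserves F hcol
    have hcolE : IsColimit ((coyoneda.obj (op s)).mapCocone (F.mapCocone cc)) :=
      isColimitOfPreserves _ hcolF
    obtain ⟨c, f, hfx⟩ := Types.jointly_surjective _ hcolE (Z.hom ≫ F.map e.inv)
    have hfx' : f ≫ F.map (cc.ι.app c) = Z.hom ≫ F.map e.inv := hfx
    refine ⟨eqv ⟨⟨H.obj c, hSH c⟩, f⟩, ?_⟩
    have hsymm : eqv.symm (eqv ⟨⟨H.obj c, hSH c⟩, f⟩) = ⟨⟨H.obj c, hSH c⟩, f⟩ :=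
      eqv.symm_apply_apply _
    show Nonempty (StructuredArrow.mk ((eqv.symm (eqv ⟨⟨H.obj c, hSH c⟩, f⟩)).2) ⟶ Z)
    rw [hsymm]
    refine ⟨StructuredArrow.homMk (cc.ι.app c ≫ e.hom) ?_⟩
    show f ≫ F.map (cc.ι.app c ≫ e.hom) = Z.hom
    rw [F.map_comp, ← Category.assoc, hfx', Category.assoc, ← F.map_comp,
      e.inv_hom_id, F.map_id, Category.comp_id]
  obtain ⟨T, hT⟩ := has_weakly_initial_of_weakly_initial_set_and_hasProducts hB
  exact hasInitial_of_weakly_initial_and_hasWideEqualizers hT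

end Aux2
end Paper
namespace Paper
section Aux3

variable {K : Type u} [Category.{0} K] {A : Type v} [Category.{0} A]

theorem hasInitial_structuredArrow (D : Set Cat.{0,0})
    (hK : DAccessible D K) (hA : DAccessible D A) [HasLimits K]
    {F : K ⥤ A} [PreservesLimits F]
    (hFc : ∀ (C : Type) [SmallCategory C], DFiltered D C →
      Nonempty (PreservesColimitsOfShape C F))
    (X : A) : HasInitial (StructuredArrow X F) := by
  obtain ⟨SA, -, hpresA, hcoverA⟩ := hA.2
  obtain ⟨C, hfilt, H, hSH, cc, ⟨hcol⟩, ⟨e⟩⟩ := hcoverA X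
  haveI : ∀ c : ↥C, HasInitial (StructuredArrow (H.obj c) F) := fun c =>
    hasInitial_structuredArrow_of_presentable D hK hFc (H.obj c) (hpresA _ (hSH c))
  haveI : HasColimitsOfShape ↥C K := hK.1 ↥C hfilt
  let J : ∀ c : ↥C, StructuredArrow (H.obj c) F := fun c => ⊥_ _
  let u : ∀ c : ↥C, (H.obj c ⟶ F.obj (J c).right) := fun c => (J c).hom
  have uniq : ∀ {c : ↥C} {Y : K} {w : H.obj c ⟶ F.obj Y} {ψ₁ ψ₂ : (J c).right ⟶ Y},
      u c ≫ F.map ψ₁ = w → u c ≫ F.map ψ₂ = w → ψ₁ = ψ₂ := by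
    intro c Y w ψ₁ ψ₂ h1 h2
    exact congrArg CommaMorphism.right
      (initial.hom_ext (StructuredArrow.homMk ψ₁ h1 : J c ⟶ StructuredArrow.mk w)
        (StructuredArrow.homMk ψ₂ h2))
  let Imap : ∀ {c c' : ↥C} (_ : c ⟶ c'), (J c).right ⟶ (J c').right := fun {c c'} m =>
    (initial.to ((StructuredArrow.map (H.map m)).obj (J c'))).right
  have hmap : ∀ {c c' : ↥C} (m : c ⟶ c'), u c ≫ F.map (Imap m) = H.map m ≫ u c' := by
    intro c c' m
    exact StructuredArrow.w (initial.to ((StructuredArrow.map (H.map m)).obj (J c')))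
  let I : ↥C ⥤ K :=
    { obj := fun c => (J c).right
      map := fun m => Imap m
      map_id := fun c => uniq (w := u c) (by rw [hmap]; simp) (by simp)
      map_comp := fun {c c' c''} m n => uniq (w := H.map (m ≫ n) ≫ u c'') (hmap (m ≫ n))
        (by rw [F.map_comp, ← Category.assoc, hmap m, Category.assoc, hmap n,
              ← Category.assoc, ← H.map_comp]) }
  have hmapI : ∀ {c c' : ↥C} (m : c ⟶ c'), u c ≫ F.map (I.map m) = H.map m ≫ u c' := hmap
  let dA : Cocone H :=
    { pt := F.obj (colimit I)
      ι := { app := fun c => u c ≫ F.map (colimit.ι I c)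
             naturality := fun {c c'} m => by
               dsimp
               rw [Category.comp_id, ← Category.assoc, ← hmapI m, Category.assoc,
                 ← F.map_comp, colimit.w I m] } }
  let uX : X ⟶ F.obj (colimit I) := e.inv ≫ hcol.desc dA
  have huX : e.hom ≫ uX = hcol.desc dA := by
    simp [uX]
  let T : StructuredArrow X F := StructuredArrow.mk uX
  have key : ∀ (Z : StructuredArrow X F) (ψ : T ⟶ Z) (c : ↥C),
      u c ≫ F.map (colimit.ι I c ≫ ψ.right) = cc.ι.app c ≫ e.hom ≫ Z.hom := by
    intro Z ψ c
    have hw : uX ≫ F.map ψ.right = Z.hom := StructuredArrow.w ψ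
    rw [F.map_comp, ← Category.assoc]
    have : u c ≫ F.map (colimit.ι I c) = cc.ι.app c ≫ hcol.desc dA := (hcol.fac dA c).symm
    rw [this, ← huX]
    simp only [Category.assoc, hw]
  haveI hNE : ∀ Z : StructuredArrow X F, Nonempty (T ⟶ Z) := by
    intro Z
    let t : ∀ c : ↥C, (J c).right ⟶ Z.right := fun c =>
      (initial.to (StructuredArrow.mk (cc.ι.app c ≫ e.hom ≫ Z.hom))).right
    have ht : ∀ c, u c ≫ F.map (t c) = cc.ι.app c ≫ e.hom ≫ Z.hom := fun c =>
      StructuredArrow.w _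
    have tnat : ∀ {c c' : ↥C} (m : c ⟶ c'), I.map m ≫ t c' = t c := by
      intro c c' m
      refine uniq (w := cc.ι.app c ≫ e.hom ≫ Z.hom) ?_ (ht c)
      rw [F.map_comp, ← Category.assoc, hmapI m, Category.assoc, ht c', ← Category.assoc,
        cc.w m]
    let tt : colimit I ⟶ Z.right :=
      colimit.desc I ⟨Z.right, ⟨t, fun {c c'} m => by simp [tnat m]⟩⟩
    refine ⟨StructuredArrow.homMk tt ?_⟩
    show uX ≫ F.map tt = Z.hom
    have : hcol.desc dA ≫ F.map tt = e.hom ≫ Z.hom := by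
      apply hcol.hom_ext
      intro c
      rw [← Category.assoc, hcol.fac dA c]
      show (u c ≫ F.map (colimit.ι I c)) ≫ F.map tt = cc.ι.app c ≫ e.hom ≫ Z.hom
      rw [Category.assoc, ← F.map_comp, colimit.ι_desc]
      exact ht c
    simp only [uX, Category.assoc, this, Iso.inv_hom_id_assoc]
  haveI hSS : ∀ Z : StructuredArrow X F, Subsingleton (T ⟶ Z) := by
    intro Z
    constructor
    intro ψ₁ ψ₂
    apply StructuredArrow.hom_ext
    apply colimit.hom_ext
    intro c
    exact uniq (key Z ψ₁ c) (key Z ψ₂ c)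
  exact hasInitial_of_unique T

end Aux3
end Paper

namespace Paper

/-- Let `D` be weakly sound, `K` a `D`-accessible complete category and
`A` a `D`-accessible category.  For a functor `F : K ⥤ A` the following are equivalent:
(1) `F` preserves all small limits and all colimits of `D`-filtered shapes;
(2) `F` preserves colimits of all `D`-filtered shapes and admits a left adjoint;
(3) `F` admits a left adjoint sending `D`-presentable objects to `D`-presentable objects. -/
theorem adjoint_characterization (D : Set Cat.{0,0}) (hD : WeaklySound D)
    (K : Type u) [Category.{0} K] (A : Type v) [Category.{0} A]
    (hK : DAccessible D K) (hKcomplete : HasLimits K) (hA : DAccessible D A)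
    (F : K ⥤ A) :
    List.TFAE [
      Nonempty (PreservesLimitsOfSize.{0,0} F) ∧
        ∀ (C : Type) [SmallCategory C], DFiltered D C →
          Nonempty (PreservesColimitsOfShape C F),
      (∀ (C : Type) [SmallCategory C], DFiltered D C →
          Nonempty (PreservesColimitsOfShape C F)) ∧
        ∃ L : A ⥤ K, Nonempty (L ⊣ F),
      ∃ L : A ⥤ K, Nonempty (L ⊣ F) ∧
        ∀ X : A, DPresentable D X → DPresentable D (L.obj X)] := by
  tfae_have 1 → 2 := by
    rintro ⟨⟨pl⟩, pc⟩
    refine ⟨pc, ?_⟩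
    haveI := hKcomplete
    haveI : PreservesLimits F := pl
    haveI : ∀ X : A, HasInitial (StructuredArrow X F) := fun X =>
      hasInitial_structuredArrow D hK hA pc X
    haveI : F.IsRightAdjoint := isRightAdjointOfStructuredArrowInitials F
    exact ⟨F.leftAdjoint, ⟨Adjunction.ofIsRightAdjoint F⟩⟩
  tfae_have 2 → 3 := by
    rintro ⟨pc, L, ⟨adj⟩⟩
    exact ⟨L, ⟨adj⟩, fun X hX => dPresentable_leftAdjoint D adj pc hX⟩
  tfae_have 3 → 1 := by
    rintro ⟨L, ⟨adj⟩, hL⟩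
    exact ⟨⟨adj.rightAdjoint_preservesLimits⟩, fun C _ hC =>
      ⟨preservesColimitsOfShape_of_leftAdjoint D hA adj hL C hC⟩⟩
  tfae_finish

end Paper
end

section
/- Let D be a weakly sound class of small categories. If K is a locally D-presentable category and E is a small category, then the functor category [E, K] is locally D-presentable. -/
open CategoryTheory CategoryTheory.Limits Opposite

universe w v u

namespace Paper

/-- If `D` is weakly sound, `K` is locally `D`-presentable and `E` is a
small category, then the functor category `[E, K]` is locally `D`-presentable. -/
theorem locallyDPresentable_functorCategory (D : Set Cat.{0,0}) (hD : WeaklySound D)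
    (K : Type u) [Category.{0} K] (hK : LocallyDPresentable D K)
    (E : Type) [SmallCategory E] :
    LocallyDPresentable D (E ⥤ K) := by
  obtain ⟨hcolim, G, hGsmall, hGpres, hGgen⟩ := hK
  haveI := hcolim
  haveI := hGsmall
  let adj : ∀ e : E, evaluationLeftAdjoint K e ⊣ (evaluation E K).obj e :=
    fun e => evaluationAdjunctionRight K e
  let Lf : E × ↥G → (E ⥤ K) := fun p => (evaluationLeftAdjoint K p.1).obj p.2.1
  refine ⟨inferInstance, Set.range Lf, inferInstance, ?_, ?_⟩
  · -- D-presentability of the generators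
    rintro X ⟨⟨e, g, hg⟩, rfl⟩
    intro C _ hC
    obtain ⟨pres⟩ := hGpres g hg C hC
    haveI := pres
    have iso : (evaluation E K).obj e ⋙ coyoneda.obj (op g) ≅
        coyoneda.obj (op ((evaluationLeftAdjoint K e).obj g)) :=
      (NatIso.ofComponents (fun F => Equiv.toIso ((adj e).homEquiv g F))
        (fun {F F'} η => by
          ext f
          exact (adj e).homEquiv_naturality_right f η)).symm
    exact ⟨preservesColimitsOfShape_of_natIso (F := (evaluation E K).obj e ⋙ coyoneda.obj (op g))
      iso⟩
  · -- strong generation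
    constructor
    intro F F' η hη
    haveI := hη
    haveI : (restrictedYoneda G).ReflectsIsomorphisms := hGgen
    haveI : ∀ e : E, IsIso (η.app e) := by
      intro e
      haveI : ∀ gg : (ObjectProperty.FullSubcategory fun X : K => X ∈ G)ᵒᵖ,
          IsIso (((restrictedYoneda G).map (η.app e)).app gg) := by
        intro gg
        rw [isIso_iff_bijective]
        obtain ⟨⟨g, hg⟩⟩ := gg
        show Function.Bijective (fun f : g ⟶ F.obj e => f ≫ η.app e)
        have memA : (evaluationLeftAdjoint K e).obj g ∈ Set.range Lf := ⟨(e, ⟨g, hg⟩), rfl⟩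
        have h2 : IsIso (((restrictedYoneda (Set.range Lf)).map η).app
            (op ⟨(evaluationLeftAdjoint K e).obj g, memA⟩)) := inferInstance
        have hbij : Function.Bijective
            (fun u : (evaluationLeftAdjoint K e).obj g ⟶ F => u ≫ η) :=
          (isIso_iff_bijective _).mp h2
        have key : (fun f : g ⟶ F.obj e => f ≫ η.app e) =
            ((adj e).homEquiv g F') ∘ (fun u => u ≫ η) ∘ ((adj e).homEquiv g F).symm := by
          funext f
          show f ≫ η.app e = ((adj e).homEquiv g F') (((adj e).homEquiv g F).symm f ≫ η)
          rw [Adjunction.homEquiv_naturality_right, Equiv.apply_symm_apply]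
          rfl
        rw [key]
        exact ((adj e).homEquiv g F').bijective.comp
          (hbij.comp ((adj e).homEquiv g F).symm.bijective)
      haveI : IsIso ((restrictedYoneda G).map (η.app e)) := NatIso.isIso_of_isIso_app _
      exact isIso_of_reflects_iso (η.app e) (restrictedYoneda G)
    exact NatIso.isIso_of_isIso_app η

end Paper
end

section
/- Let Φ ⊆ Ψ ⊆ Ξ be sound classes of weights over Type. If Φ ⊴ Ψ and Ψ ⊴ Ξ then Φ ⊴ Ξ, where Φ ⊴ Ψ denotes the sharply-less condition: every Φ-accessible category is Ψ-accessible, and for every functor F : A → B between Φ-accessible categories that preserves all colimits weighted by Φ-flat weights, if F maps A_Φ into B_Φ then F maps A_Ψ into B_Ψ (and correspondingly for the other pairs). -/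
open CategoryTheory CategoryTheory.Limits Opposite

universe w v u

namespace PaperW

/-- A class of weights over `Type`: an isomorphism-closed collection of presheaves on each
small category. -/
structure WeightClass where
  mem : ∀ B : Cat.{0,0}, ((↥B)ᵒᵖ ⥤ Type) → Prop
  isoClosed : ∀ (B : Cat.{0,0}) (M N : (↥B)ᵒᵖ ⥤ Type), (M ≅ N) → mem B M → mem B N

/-- The `M`-weighted colimit functor, sending `F : C ⥤ Type` to the conical colimit of
`F ∘ π` over the category of elements of `M`. -/
noncomputable def wcolimF {C : Type u} [Category.{0} C] (M : Cᵒᵖ ⥤ Type)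
    (h : HasColimitsOfShape (M.Elements)ᵒᵖ (Type 0)) : (C ⥤ Type) ⥤ Type :=
  letI := h
  (Functor.whiskeringLeft (M.Elements)ᵒᵖ C (Type 0)).obj (CategoryOfElements.π M).leftOp ⋙ colim

/-- A weight `M : Cᵒᵖ ⥤ Type` is `Φ`-flat: the `M`-weighted colimit functor preserves
`W`-weighted limits for every weight `W` in `Φ`. -/
def FlatW (Φ : WeightClass) {C : Type u} [Category.{0} C] (M : Cᵒᵖ ⥤ Type) : Prop :=
  ∃ h : HasColimitsOfShape (M.Elements)ᵒᵖ (Type 0),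
    ∀ (B : Cat.{0,0}) (W : (↥B)ᵒᵖ ⥤ Type), Φ.mem B W →
      ∀ G : (↥B)ᵒᵖ ⥤ (C ⥤ Type),
        Nonempty (PreservesLimit (CategoryOfElements.π W ⋙ G) (wcolimF M h))

/-- The closure of a set of objects `S` of `A` under colimits weighted by weights
belonging to the class `W` (the smallest replete such collection). -/
inductive WClos (W : ∀ B : Cat.{0,0}, ((↥B)ᵒᵖ ⥤ Type) → Prop)
    {A : Type u} [Category.{0} A] (S : Set A) : A → Prop
  | of {X : A} : X ∈ S → WClos W S X
  | iso {X Y : A} (e : X ≅ Y) : WClos W S X → WClos W S Y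
  | wcolim (B : Cat.{0,0}) (M : (↥B)ᵒᵖ ⥤ Type) (hM : W B M)
      (H : ↥B ⥤ A) (hH : ∀ b : ↥B, WClos W S (H.obj b))
      (c : Cocone ((CategoryOfElements.π M).leftOp ⋙ H)) (hc : IsColimit c) :
      WClos W S c.pt

/-- The representable presheaves on a small category. -/
def reps (C : Cat.{0,0}) : Set ((↥C)ᵒᵖ ⥤ Type) :=
  Set.range (yoneda (C := ↥C)).obj

/-- `ΦC`, the free `Φ`-cocompletion of `C`: the `Φ`-closure of the representables. -/
def freeCocompl (Φ : WeightClass) (C : Cat.{0,0}) : Set ((↥C)ᵒᵖ ⥤ Type) :=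
  {M | WClos Φ.mem (reps C) M}

/-- `Φ` is saturated: membership in `Φ(C)` coincides with membership in `ΦC`. -/
def Saturated (Φ : WeightClass) : Prop :=
  ∀ (C : Cat.{0,0}) (M : (↥C)ᵒᵖ ⥤ Type), Φ.mem C M ↔ M ∈ freeCocompl Φ C

/-- `Φ` is locally small: `ΦC` is essentially small for every small `C`. -/
def LocallySmallW (Φ : WeightClass) : Prop :=
  ∀ C : Cat.{0,0},
    EssentiallySmall.{0} (ObjectProperty.FullSubcategory fun M : (↥C)ᵒᵖ ⥤ Type => M ∈ freeCocompl Φ C)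

/-- A category admits all `Φ`-weighted colimits. -/
def WCocomplete (Φ : WeightClass) (C : Type u) [Category.{0} C] : Prop :=
  ∀ (B : Cat.{0,0}) (W : (↥B)ᵒᵖ ⥤ Type), Φ.mem B W →
    ∀ H : ↥B ⥤ C, HasColimit ((CategoryOfElements.π W).leftOp ⋙ H)

/-- `M : Cᵒᵖ ⥤ Type` sends `Φ`-weighted colimits in `C` to weighted limits in `Type`. -/
def WContinuous (Φ : WeightClass) {C : Type u} [Category.{0} C] (M : Cᵒᵖ ⥤ Type) : Prop :=
  ∀ (B : Cat.{0,0}) (W : (↥B)ᵒᵖ ⥤ Type), Φ.mem B W →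
    ∀ H : ↥B ⥤ C,
      Nonempty (PreservesLimit ((CategoryOfElements.π W).leftOp ⋙ H).op M)

/-- The weak-soundness condition for a class of weights. -/
def WeaklySoundW (Φ : WeightClass) : Prop :=
  ∀ C : Cat.{0,0}, WCocomplete Φ ↥C →
    ∀ M : (↥C)ᵒᵖ ⥤ Type, WContinuous Φ M → FlatW Φ M

/-- `Φ` is sound: saturated, locally small, and weakly sound. -/
def SoundW (Φ : WeightClass) : Prop :=
  Saturated Φ ∧ LocallySmallW Φ ∧ WeaklySoundW Φ

/-- An object `X` is `Φ`-presentable: `Hom(X, -)` preserves all existing colimits weighted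
by `Φ`-flat weights. -/
def WPresentable (Φ : WeightClass) {A : Type u} [Category.{0} A] (X : A) : Prop :=
  ∀ (B : Cat.{0,0}) (M : (↥B)ᵒᵖ ⥤ Type), FlatW Φ M → ∀ H : ↥B ⥤ A,
    Nonempty (PreservesColimit ((CategoryOfElements.π M).leftOp ⋙ H)
      (coyoneda.obj (op X)))

/-- `A` is `Φ`-accessible: it admits all colimits weighted by `Φ`-flat weights and has a
small family of `Φ`-presentable objects generating it under `Φ`-flat weighted colimits. -/
def WAccessible (Φ : WeightClass) (A : Type u) [Category.{0} A] : Prop :=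
  (∀ (B : Cat.{0,0}) (M : (↥B)ᵒᵖ ⥤ Type), FlatW Φ M → ∀ H : ↥B ⥤ A,
    HasColimit ((CategoryOfElements.π M).leftOp ⋙ H)) ∧
  ∃ S : Set A, Small.{0} (↥S) ∧ (∀ X ∈ S, WPresentable Φ X) ∧
    ∀ X : A, ∃ (B : Cat.{0,0}) (M : (↥B)ᵒᵖ ⥤ Type) (H : ↥B ⥤ A),
      FlatW Φ M ∧ (∀ b : ↥B, H.obj b ∈ S) ∧
      ∃ c : Cocone ((CategoryOfElements.π M).leftOp ⋙ H),
        Nonempty (IsColimit c) ∧ Nonempty (c.pt ≅ X)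

/-- The class `Φ⁺` of `Φ`-flat weights. -/
def flatClass (Φ : WeightClass) : ∀ B : Cat.{0,0}, ((↥B)ᵒᵖ ⥤ Type) → Prop :=
  fun _ M => FlatW Φ M

/-- The class `Φ⁺ ∩ Ψ` of weights which are `Φ`-flat and lie in `Ψ`. -/
def flatInter (Φ Ψ : WeightClass) : ∀ B : Cat.{0,0}, ((↥B)ᵒᵖ ⥤ Type) → Prop :=
  fun B M => FlatW Φ M ∧ Ψ.mem B M

/-- Containment of classes of weights. -/
def Sub (Φ Ψ : WeightClass) : Prop :=
  ∀ (B : Cat.{0,0}) (M : (↥B)ᵒᵖ ⥤ Type), Φ.mem B M → Ψ.mem B M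

/-- `F` preserves all colimits weighted by `Φ`-flat weights. -/
def PreservesFlatColimits (Φ : WeightClass) {A : Type u} {A' : Type v}
    [Category.{0} A] [Category.{0} A'] (F : A ⥤ A') : Prop :=
  ∀ (B : Cat.{0,0}) (M : (↥B)ᵒᵖ ⥤ Type), FlatW Φ M → ∀ H : ↥B ⥤ A,
    Nonempty (PreservesColimit ((CategoryOfElements.π M).leftOp ⋙ H) F)

/-- `Φ⁺C ∩ ΨC`: presheaves lying in both `Φ⁺C` and `ΨC`. -/
def interSub (Φ Ψ : WeightClass) (C : Cat.{0,0}) : Set ((↥C)ᵒᵖ ⥤ Type) :=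
  {M | WClos (flatClass Φ) (reps C) M ∧ WClos Ψ.mem (reps C) M}

lemma yoneda_mem_interSub (Φ Ψ : WeightClass) (C : Cat.{0,0}) (c : ↥C) :
    yoneda.obj c ∈ interSub Φ Ψ C :=
  ⟨WClos.of ⟨c, rfl⟩, WClos.of ⟨c, rfl⟩⟩

/-- The corestricted Yoneda embedding `C ⥤ Φ⁺C ∩ ΨC`. -/
noncomputable def corestrictedYoneda (Φ Ψ : WeightClass) (C : Cat.{0,0}) :
    ↥C ⥤ ObjectProperty.FullSubcategory fun M : (↥C)ᵒᵖ ⥤ Type => M ∈ interSub Φ Ψ C :=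
  ObjectProperty.lift _ yoneda (yoneda_mem_interSub Φ Ψ C)

end PaperW

namespace PaperW

/-- `Φ` is sharply less than `Ψ` (condition (4) of the paper's theorem): every
`Φ`-accessible category is `Ψ`-accessible, and every functor between `Φ`-accessible
categories which preserves `Φ`-flat weighted colimits and `Φ`-presentable objects also
preserves `Ψ`-presentable objects. -/
def SharpLess (Φ Ψ : WeightClass) : Prop :=
  (∀ (A : Type 1) [Category.{0} A], WAccessible Φ A → WAccessible Ψ A) ∧
    (∀ (A A' : Type 1) [Category.{0} A] [Category.{0} A'] (F : A ⥤ A'),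
      WAccessible Φ A → WAccessible Φ A' → PreservesFlatColimits Φ F →
      (∀ X : A, WPresentable Φ X → WPresentable Φ (F.obj X)) →
      ∀ X : A, WPresentable Ψ X → WPresentable Ψ (F.obj X))

/-- The sharply-less relation between sound classes of weights is
transitive. -/
theorem sharpLess_trans (Φ Ψ Ξ : WeightClass)
    (hΦ : SoundW Φ) (hΨ : SoundW Ψ) (hΞ : SoundW Ξ)
    (hΦΨ : Sub Φ Ψ) (hΨΞ : Sub Ψ Ξ)
    (h₁ : SharpLess Φ Ψ) (h₂ : SharpLess Ψ Ξ) :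
    SharpLess Φ Ξ := by
  -- Ψ-flat weights are Φ-flat since Φ ⊆ Ψ
  have flat_mono : ∀ (C : Cat.{0,0}) (M : (↥C)ᵒᵖ ⥤ Type),
      FlatW Ψ M → FlatW Φ M := by
    intro C M ⟨h, hf⟩
    exact ⟨h, fun B W hW => hf B W (hΦΨ B W hW)⟩
  -- hence Φ-presentable implies Ψ-presentable
  have pres_mono : ∀ (A : Type 1) [Category.{0} A] (X : A),
      WPresentable Φ X → WPresentable Ψ X := by
    intro A _ X hX B M hM H
    exact hX B M (flat_mono B M hM) H
  have pfc_mono : ∀ (A A' : Type 1) [Category.{0} A] [Category.{0} A'] (F : A ⥤ A'),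
      PreservesFlatColimits Φ F → PreservesFlatColimits Ψ F := by
    intro A A' _ _ F hF B M hM H
    exact hF B M (flat_mono B M hM) H
  constructor
  · intro A _ hA
    exact h₂.1 A (h₁.1 A hA)
  · intro A A' _ _ F hA hA' hF hP X hX
    have hAΨ := h₁.1 A hA
    have hA'Ψ := h₁.1 A' hA'
    exact h₂.2 A A' F hAΨ hA'Ψ (pfc_mono A A' F hF)
      (fun Y hY => h₁.2 A A' F hA hA' hF hP Y hY) X hX

end PaperW
end

section
/- Let D be a weakly sound class of small categories. The following are equivalent for a category K: (1) K is equivalent to the Eilenberg–Moore category of algebras of a monad T on Type whose underlying endofunctor preserves colimits of all D-filtered shapes; (2) K is cocomplete and has an object G such that the single-object family {G} is a strong generator, G is D-presentable, and G is projective in the sense that Hom(G, −) : K → Type preserves coequalizers of Hom(G, −)-split pairs. Moreover, when these hold, K is locally D-presentable. -/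
open CategoryTheory CategoryTheory.Limits Opposite

universe w v u

namespace Paper

/-- `K` is equivalent to the Eilenberg–Moore category of a monad on `Type` whose underlying
endofunctor preserves colimits of all `D`-filtered shapes. -/
def IsDAryMonadic (D : Set Cat.{0,0}) (K : Type u) [Category.{0} K] : Prop :=
  ∃ T : Monad (Type 0),
    (∀ (C : Type) [SmallCategory C], DFiltered D C →
      Nonempty (PreservesColimitsOfShape C T.toFunctor)) ∧
    Nonempty (K ≌ T.Algebra)

/-- `K` is cocomplete with a single-object strong generator `G` which is `D`-presentable and
projective (`Hom(G, -)` preserves coequalizers of `Hom(G, -)`-split pairs). -/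
def HasProjectiveDPresentableGenerator (D : Set Cat.{0,0}) (K : Type u)
    [Category.{0} K] : Prop :=
  HasColimits K ∧
    ∃ G : K, IsStrongGenerator {G} ∧ DPresentable D G ∧
      ∀ (A B : K) (f g : A ⟶ B), (coyoneda.obj (op G)).IsSplitPair f g →
        Nonempty (PreservesColimit (parallelPair f g) (coyoneda.obj (op G)))

/-! ### Auxiliary material: cocompleteness of algebras over a monad on `Type` (Linton) -/

namespace Linton


variable {T : Monad (Type 0)} {J : Type} [SmallCategory J] (H : J ⥤ T.Algebra)

/-- underlying disjoint union -/
abbrev W : Type := Σ j : J, (H.obj j).A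

/-- generating relations -/
inductive R0 : T.obj (W H) → T.obj (W H) → Prop
  | nat {j j' : J} (φ : j ⟶ j') (x : (H.obj j).A) :
      R0 (T.η.app (W H) ⟨j', (H.map φ).f x⟩) (T.η.app (W H) ⟨j, x⟩)
  | str (j : J) (t : T.obj (H.obj j).A) :
      R0 (T.map (↾fun x => (⟨j, x⟩ : W H)) t) (T.η.app (W H) ⟨j, (H.obj j).a t⟩)

/-- the congruence -/
def E (u v : T.obj (W H)) : Prop :=
  ∀ (C : T.Algebra) (h : T.free.obj (W H) ⟶ C),
    (∀ a b, R0 H a b → h.f a = h.f b) → h.f u = h.f v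

lemma E_of_R0 {u v} (huv : R0 H u v) : E H u v := fun _ h hc => hc _ _ huv

instance ESetoid : Setoid (T.obj (W H)) where
  r := E H
  iseqv := ⟨fun _ _ _ _ => rfl, fun h C hm hc => (h C hm hc).symm,
    fun h1 h2 C hm hc => (h1 C hm hc).trans (h2 C hm hc)⟩

def Q : Type := Quotient (ESetoid H)

def q : T.obj (W H) → Q H := Quotient.mk _

noncomputable def s : Q H → T.obj (W H) := Quotient.out

lemma q_s (x : Q H) : q H (s H x) = x := Quotient.out_eq x

lemma q_eq_of_E {u v} (h : E H u v) : q H u = q H v := Quotient.sound h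

lemma E_s_q (u : T.obj (W H)) : E H (s H (q H u)) u := Quotient.exact (q_s H (q H u))


lemma E_closed (t' : T.obj {p : T.obj (W H) × T.obj (W H) // E H p.1 p.2}) :
    E H (T.μ.app (W H) (T.map (↾fun (e : {p : T.obj (W H) × T.obj (W H) // E H p.1 p.2}) => e.1.1) t'))
        (T.μ.app (W H) (T.map (↾fun (e : {p : T.obj (W H) × T.obj (W H) // E H p.1 p.2}) => e.1.2) t')) := by
  intro C h hc
  have hh := h.h
  have h1 : ∀ (u : T.obj (T.obj (W H))), h.f (T.μ.app (W H) u) = C.a (T.map h.f u) := by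
    intro u
    have := types_congr_hom hh u
    exact this.symm
  rw [h1, h1]
  have : T.map h.f (T.map (↾fun (e : {p : T.obj (W H) × T.obj (W H) // E H p.1 p.2}) => e.1.1) t')
      = T.map h.f (T.map (↾fun (e : {p : T.obj (W H) × T.obj (W H) // E H p.1 p.2}) => e.1.2) t') := by
    erw [← types_comp_apply (T.map _) (T.map _), ← T.map_comp,
        ← types_comp_apply (T.map _) (T.map _), ← T.map_comp]
    exact congrArg (fun φ => T.map φ t') (by ext e; exact e.2 C h hc)
  rw [this]

/-- structure map on the quotient -/
noncomputable def beta : T.obj (Q H) → Q H :=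
  fun u => q H (T.μ.app (W H) (T.map (↾(s H)) u))

lemma key (v : T.obj (T.obj (W H))) :
    beta H (T.map (↾(q H)) v) = q H (T.μ.app (W H) v) := by
  unfold beta
  rw [show T.map (↾(s H)) (T.map (↾(q H)) v) = T.map (↾fun b => s H (q H b)) v by
    rw [← types_comp_apply (T.map _) (T.map _), ← T.map_comp]; rfl]
  apply q_eq_of_E
  have hE := E_closed H (T.map (↾fun b => (⟨(s H (q H b), b), E_s_q H b⟩ :
    {p : T.obj (W H) × T.obj (W H) // E H p.1 p.2})) v)
  have e1 : T.map (↾fun (e : {p : T.obj (W H) × T.obj (W H) // E H p.1 p.2}) => e.1.1)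
      (T.map (↾fun b => (⟨(s H (q H b), b), E_s_q H b⟩ :
        {p : T.obj (W H) × T.obj (W H) // E H p.1 p.2})) v)
      = T.map (↾fun b => s H (q H b)) v := by
    rw [← types_comp_apply (T.map _) (T.map _), ← T.map_comp]; rfl
  have e2 : T.map (↾fun (e : {p : T.obj (W H) × T.obj (W H) // E H p.1 p.2}) => e.1.2)
      (T.map (↾fun b => (⟨(s H (q H b), b), E_s_q H b⟩ :
        {p : T.obj (W H) × T.obj (W H) // E H p.1 p.2})) v) = v := by
    rw [← types_comp_apply (T.map _) (T.map _), ← T.map_comp]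
    show T.map (𝟙 _) v = v
    rw [T.map_id]; rfl
  rw [e1, e2] at hE
  exact hE


lemma Tq_surj (u : T.obj (Q H)) : T.map (↾(q H)) (T.map (↾(s H)) u) = u := by
  rw [← types_comp_apply (T.map _) (T.map _), ← T.map_comp]
  have : ((↾(s H)) ≫ (↾(q H)) : Q H ⟶ Q H) = 𝟙 _ := by ext x; exact q_s H x
  rw [this, T.map_id]; rfl

lemma TTq_surj (u : T.obj (T.obj (Q H))) :
    T.map (T.map (↾(q H))) (T.map (T.map (↾(s H))) u) = u := by
  rw [← types_comp_apply (T.map _) (T.map _), ← T.map_comp, ← T.map_comp]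
  have : ((↾(s H)) ≫ (↾(q H)) : Q H ⟶ Q H) = 𝟙 _ := by ext x; exact q_s H x
  rw [this, T.map_id, T.map_id]; rfl

/-- the colimit algebra -/
noncomputable def Qalg : T.Algebra where
  A := Q H
  a := ↾(beta H)
  unit := by
    ext x
    obtain ⟨u, rfl⟩ := Quotient.exists_rep x
    show beta H (T.η.app (Q H) (q H u)) = q H u
    have hnat := types_congr_hom (T.η.naturality (↾(q H) : T.obj (W H) ⟶ Q H)) u
    simp only [types_comp_apply, Functor.id_map, TypeCat.ofHom_apply] at hnat
    rw [hnat, key]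
    have := types_congr_hom (T.left_unit (W H)) u
    simp only [types_comp_apply] at this
    rw [this]; rfl
  assoc := by
    ext u
    obtain ⟨v, rfl⟩ : ∃ v, T.map (T.map (↾(q H))) v = u := ⟨_, TTq_surj H u⟩
    show beta H (T.μ.app (Q H) (T.map (T.map (↾(q H))) v))
      = beta H (T.map (↾(beta H)) (T.map (T.map (↾(q H))) v))
    have hnat := types_congr_hom (T.μ.naturality (↾(q H) : T.obj (W H) ⟶ Q H)) v
    simp only [types_comp_apply, Functor.comp_map] at hnat
    rw [hnat, key]
    rw [← types_comp_apply (T.map (T.map (↾(q H)))) (T.map (↾(beta H))), ← T.map_comp]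
    have hcomp : (T.map (↾(q H)) ≫ ↾(beta H) : T.obj (T.obj (W H)) ⟶ Q H)
        = T.μ.app (W H) ≫ ↾(q H) := by ext w; exact key H w
    rw [hcomp, T.map_comp, types_comp_apply, key]
    have := types_congr_hom (T.assoc (W H)) v
    simp only [types_comp_apply] at this
    rw [← this]

/-- cocone leg -/
noncomputable def iota (j : J) : H.obj j ⟶ Qalg H where
  f := ↾fun x => q H (T.η.app (W H) ⟨j, x⟩)
  h := by
    ext t
    show beta H (T.map _ t) = q H (T.η.app (W H) ⟨j, (H.obj j).a t⟩)
    have : (↾fun x => q H (T.η.app (W H) ⟨j, x⟩))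
        = ((↾fun x => (⟨j, x⟩ : W H)) ≫ T.η.app (W H) ≫ ↾(q H) : (H.obj j).A ⟶ Q H) := rfl
    erw [this]
    rw [T.map_comp, T.map_comp, types_comp_apply, types_comp_apply, key]
    have hru := types_congr_hom (T.right_unit (W H)) (T.map (↾fun x => (⟨j, x⟩ : W H)) t)
    simp only [types_comp_apply, types_id_apply] at hru
    rw [hru]
    show q H _ = q H _
    exact q_eq_of_E H (E_of_R0 H (R0.str j t))

/-- the colimit cocone -/
noncomputable def QCocone : Cocone H where
  pt := Qalg H
  ι :=
    { app := iota H
      naturality := by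
        intro j j' φ
        apply Monad.Algebra.Hom.ext'
        ext x
        show q H (T.η.app (W H) ⟨j', (H.map φ).f x⟩) = q H (T.η.app (W H) ⟨j, x⟩)
        exact q_eq_of_E H (E_of_R0 H (R0.nat φ x)) }


variable (c : Cocone H)

/-- the tautological map `W → pt` of a cocone -/
def g0 : W H → c.pt.A := fun w => (c.ι.app w.1).f w.2

/-- the induced algebra map from the free algebra on `W` -/
def hbar : T.free.obj (W H) ⟶ c.pt where
  f := ↾fun u => c.pt.a (T.map (↾(g0 H c)) u)
  h := by
    ext v
    show c.pt.a (T.map (↾fun u => c.pt.a (T.map (↾(g0 H c)) u)) v)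
      = c.pt.a (T.map (↾(g0 H c)) (T.μ.app (W H) v))
    have h1 : T.map (↾fun u => c.pt.a (T.map (↾(g0 H c)) u)) v
        = T.map c.pt.a (T.map (T.map (↾(g0 H c))) v) := by
      erw [← types_comp_apply (T.map _) (T.map _), ← T.map_comp]; rfl
    rw [h1]
    have h2 := types_congr_hom c.pt.assoc (T.map (T.map (↾(g0 H c))) v)
    simp only [types_comp_apply] at h2
    rw [← h2]
    have h3 : T.μ.app c.pt.A (T.map (T.map (↾(g0 H c))) v)
        = T.map (↾(g0 H c)) (T.μ.app (W H) v) :=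
      types_congr_hom (T.μ.naturality (↾(g0 H c) : W H ⟶ c.pt.A)) v
    rw [← h3]

lemma hbar_eta (w : W H) : (hbar H c).f (T.η.app (W H) w) = g0 H c w := by
  show c.pt.a (T.map (↾(g0 H c)) (T.η.app (W H) w)) = g0 H c w
  have h1 := types_congr_hom (T.η.naturality (↾(g0 H c) : W H ⟶ c.pt.A)) w
  simp only [types_comp_apply, Functor.id_map, TypeCat.ofHom_apply] at h1
  rw [← h1]
  have := types_congr_hom c.pt.unit (g0 H c w)
  simpa using this

lemma hbar_coeq : ∀ a b, R0 H a b → (hbar H c).f a = (hbar H c).f b := by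
  intro a b hab
  induction hab with
  | nat φ x =>
    rw [hbar_eta, hbar_eta]
    exact types_congr_hom (congrArg Monad.Algebra.Hom.f (c.w φ)) x
  | str j t =>
    rw [hbar_eta]
    show c.pt.a (T.map (↾(g0 H c)) (T.map (↾fun x => (⟨j, x⟩ : W H)) t)) = _
    rw [← types_comp_apply (T.map _) (T.map _), ← T.map_comp]
    have : ((↾fun x => (⟨j, x⟩ : W H)) ≫ ↾(g0 H c) : (H.obj j).A ⟶ c.pt.A)
        = (c.ι.app j).f := rfl
    rw [this]
    have h2 := types_congr_hom (c.ι.app j).h t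
    simp only [types_comp_apply] at h2
    exact h2

lemma hbar_E {u v} (h : E H u v) : (hbar H c).f u = (hbar H c).f v :=
  h c.pt (hbar H c) (hbar_coeq H c)

/-- the descent morphism -/
noncomputable def descHom : Qalg H ⟶ c.pt where
  f := ↾fun x => (hbar H c).f (s H x)
  h := by
    ext u
    obtain ⟨v, rfl⟩ : ∃ v, T.map (↾(q H)) v = u := ⟨_, Tq_surj H u⟩
    show c.pt.a (T.map ((↾fun x => (hbar H c).f (s H x))) (T.map (↾(q H)) v))
      = (hbar H c).f (s H (beta H (T.map (↾(q H)) v)))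
    rw [key]
    have h1 : T.map (↾fun x => (hbar H c).f (s H x)) (T.map (↾(q H)) v)
        = T.map (hbar H c).f (T.map (↾fun b => s H (q H b)) v) := by
      erw [← types_comp_apply (T.map _) (T.map _), ← T.map_comp,
          ← types_comp_apply (T.map _) (T.map _), ← T.map_comp]; rfl
    rw [h1]
    have h2 : T.map (hbar H c).f (T.map (↾fun b => s H (q H b)) v)
        = T.map (hbar H c).f v := by
      erw [← types_comp_apply (T.map _) (T.map _), ← T.map_comp]
      exact congrArg (fun φ => T.map φ v) (by ext b; exact hbar_E H c (E_s_q H b))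
    rw [h2]
    have h3 : c.pt.a (T.map (hbar H c).f v) = (hbar H c).f (T.μ.app (W H) v) :=
      types_congr_hom (hbar H c).h v
    rw [h3]
    show (hbar H c).f (T.μ.app (W H) v) = _
    exact (hbar_E H c (E_s_q H (T.μ.app (W H) v))).symm

lemma descHom_q (u : T.obj (W H)) : (descHom H c).f (q H u) = (hbar H c).f u :=
  hbar_E H c (E_s_q H u)

/-- `Q` is the colimit -/
noncomputable def QIsColimit : IsColimit (QCocone H) where
  desc := descHom H
  fac := by
    intro c j
    apply Monad.Algebra.Hom.ext'
    ext x
    show (descHom H c).f (q H (T.η.app (W H) ⟨j, x⟩)) = (c.ι.app j).f x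
    rw [descHom_q, hbar_eta]
    rfl
  uniq := by
    intro c m hm
    apply Monad.Algebra.Hom.ext'
    ext x
    obtain ⟨u, rfl⟩ := Quotient.exists_rep x
    show m.f (q H u) = (descHom H c).f (q H u)
    rw [descHom_q]
    -- q as an algebra morphism
    let qhom : T.free.obj (W H) ⟶ Qalg H :=
      { f := ↾(q H)
        h := by ext v; exact key H v }
    have hfree : ∀ (h' : T.free.obj (W H) ⟶ c.pt),
        (∀ w, h'.f (T.η.app (W H) w) = g0 H c w) → h'.f u = (hbar H c).f u := by
      intro h' hw
      have expand : ∀ (h'' : T.free.obj (W H) ⟶ c.pt) (v : T.obj (W H)),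
          h''.f v = c.pt.a (T.map (↾fun w => h''.f (T.η.app (W H) w)) v) := by
        intro h'' v
        have hru := types_congr_hom (T.right_unit (W H)) v
        simp only [types_comp_apply, types_id_apply] at hru
        conv_lhs => rw [← hru]
        have h3 : c.pt.a (T.map h''.f (T.map (T.η.app (W H)) v))
            = h''.f (T.μ.app (W H) (T.map (T.η.app (W H)) v)) :=
          types_congr_hom h''.h (T.map (T.η.app (W H)) v)
        rw [← h3]
        congr 1
        erw [← types_comp_apply (T.map _) (T.map _), ← T.map_comp]; rfl
      rw [expand h' u, expand (hbar H c) u]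
      have heq : (fun w => h'.f (T.η.app (W H) w))
          = (fun w => (hbar H c).f (T.η.app (W H) w)) :=
        funext fun w => by rw [hw w, hbar_eta]
      rw [heq]
    exact hfree (qhom ≫ m) (by
      intro w
      show m.f (q H (T.η.app (W H) w)) = g0 H c w
      have := types_congr_hom (congrArg Monad.Algebra.Hom.f (hm w.1)) w.2
      exact this)


theorem hasColimits_algebra : HasColimits (T.Algebra) where
  has_colimits_of_shape := fun _ _ =>
    { has_colimit := fun H => HasColimit.mk ⟨QCocone H, QIsColimit H⟩ }


end Linton

theorem hasColimits_algebra (T : Monad (Type 0)) : HasColimits T.Algebra :=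
  Linton.hasColimits_algebra

/-! ### Copowers and the copower adjunction -/

section Copow

variable {K : Type u} [Category.{0} K] [HasColimits K] (G : K)

noncomputable def copow : Type 0 ⥤ K where
  obj X := ∐ (fun _ : X => G)
  map {X Y} f := Sigma.desc (fun x => Sigma.ι (fun _ : Y => G) (f x))
  map_id X := by apply Sigma.hom_ext; intro x; simp
  map_comp f g := by apply Sigma.hom_ext; intro x; simp

noncomputable def copowAdj : copow G ⊣ coyoneda.obj (op G) :=
  Adjunction.mkOfHomEquiv
    { homEquiv := fun X A =>
        { toFun := fun u => ↾fun x => Sigma.ι (fun _ : X => G) x ≫ u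
          invFun := fun v => Sigma.desc (fun x => v x)
          left_inv := fun u => by apply Sigma.hom_ext; intro x; simp
          right_inv := fun v => by ext x; simp }
      homEquiv_naturality_left_symm := by
        intro X Y A f v
        apply Sigma.hom_ext
        intro x
        simp [copow]
        exact (Sigma.ι_desc _ x).trans (Sigma.ι_desc _ (f x)).symm
      homEquiv_naturality_right := by
        intro X A B u f
        ext x
        simp
        exact (Category.assoc (Sigma.ι (fun _ : X => G) x) u f).symm }

end Copow

/-! ### Strong generators with a single object -/

lemma isStrongGenerator_singleton_iff {K : Type u} [Category.{0} K] (G : K) :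
    IsStrongGenerator {G} ↔ (coyoneda.obj (op G)).ReflectsIsomorphisms := by
  constructor
  · intro hSG
    constructor
    intro X Y f hf
    haveI : (restrictedYoneda {G}).ReflectsIsomorphisms := hSG
    have : IsIso ((restrictedYoneda {G}).map f) := by
      apply (config := { allowSynthFailures := true }) NatIso.isIso_of_isIso_app
      intro Z
      obtain ⟨⟨Z, hZ⟩⟩ := Z
      obtain rfl : Z = G := hZ
      exact hf
    exact isIso_of_reflects_iso f (restrictedYoneda {G})
  · intro hco
    constructor
    intro X Y f hf
    have happ : IsIso (((restrictedYoneda {G}).map f).app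
        (op ⟨G, rfl⟩)) := inferInstance
    haveI : (coyoneda.obj (op G)).ReflectsIsomorphisms := hco
    haveI : IsIso ((coyoneda.obj (op G)).map f) := happ
    exact isIso_of_reflects_iso f (coyoneda.obj (op G))

/-! ### Transport lemmas along natural isomorphisms -/

lemma reflectsIsos_of_natIso {C : Type*} {D : Type*} [Category C] [Category D]
    {F F' : C ⥤ D} (φ : F ≅ F') [F'.ReflectsIsomorphisms] : F.ReflectsIsomorphisms := by
  constructor
  intro A B f hf
  have : IsIso (F'.map f) := by
    rw [← NatIso.naturality_1 φ f]
    infer_instance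
  exact isIso_of_reflects_iso f F'

lemma hasSplitCoequalizer_of_natIso {C : Type*} {D : Type*} [Category C] [Category D]
    {F F' : C ⥤ D} (φ : F ≅ F') {A B : C} (f g : A ⟶ B)
    (h : HasSplitCoequalizer (F.map f) (F.map g)) :
    HasSplitCoequalizer (F'.map f) (F'.map g) := by
  obtain ⟨Z, π, ⟨t⟩⟩ := h.splittable
  have hf : F'.map f = φ.inv.app A ≫ F.map f ≫ φ.hom.app B := (NatIso.naturality_1 φ f).symm
  have hg : F'.map g = φ.inv.app A ≫ F.map g ≫ φ.hom.app B := (NatIso.naturality_1 φ g).symm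
  refine ⟨⟨Z, φ.inv.app B ≫ π, ⟨{
    rightSection := t.rightSection ≫ φ.hom.app B
    leftSection := φ.inv.app B ≫ t.leftSection ≫ φ.hom.app A
    condition := ?_
    rightSection_π := ?_
    leftSection_bottom := ?_
    leftSection_top := ?_ }⟩⟩⟩
  · rw [hf, hg]
    simp only [Category.assoc, Iso.hom_inv_id_app_assoc]
    rw [t.condition]
  · simp only [Category.assoc, Iso.hom_inv_id_app_assoc,
      IsSplitCoequalizer.rightSection_π_assoc, IsSplitCoequalizer.rightSection_π]
  · rw [hg]
    simp only [Category.assoc, Iso.hom_inv_id_app_assoc,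
      IsSplitCoequalizer.leftSection_bottom_assoc, Iso.inv_hom_id_app]
  · rw [hf]
    simp only [Category.assoc, Iso.hom_inv_id_app_assoc,
      IsSplitCoequalizer.leftSection_top_assoc]

/-! ### The generator of a monadic category -/

section GenIso

variable {K : Type u} [Category.{0} K] {T : Monad (Type 0)} (e : K ≌ T.Algebra)

noncomputable def genIso1 : coyoneda.obj (op (e.inverse.obj (T.free.obj PUnit)))
    ≅ e.functor ⋙ coyoneda.obj (op (T.free.obj PUnit)) :=
  NatIso.ofComponents
    (fun X => Equiv.toIso (e.symm.toAdjunction.homEquiv (T.free.obj PUnit) X))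
    (by
      intro X Y f
      ext u
      exact (e.symm.toAdjunction).homEquiv_naturality_right u f)

noncomputable def genIso2 : coyoneda.obj (op (T.free.obj (PUnit : Type 0))) ≅ T.forget :=
  NatIso.ofComponents
    (fun A => Equiv.toIso ((T.adj.homEquiv PUnit A).trans
      (TypeCat.homEquiv.trans (Equiv.funUnique PUnit _))))
    (by
      intro A B f
      ext u
      exact types_congr_hom (T.adj.homEquiv_naturality_right u f) PUnit.unit)

noncomputable def genIso : coyoneda.obj (op (e.inverse.obj (T.free.obj PUnit)))
    ≅ e.functor ⋙ T.forget :=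
  genIso1 e ≪≫ Functor.isoWhiskerLeft e.functor genIso2

end GenIso

/-! ### The two directions -/

theorem forward_direction (D : Set Cat.{0,0}) {K : Type u} [Category.{0} K]
    (hK : HasProjectiveDPresentableGenerator D K) : IsDAryMonadic D K := by
  obtain ⟨hcolim, G, hsg, hpres, hproj⟩ := hK
  haveI := hcolim
  haveI hrefl : (coyoneda.obj (op G)).ReflectsIsomorphisms :=
    (isStrongGenerator_singleton_iff G).mp hsg
  haveI h1 : Monad.HasCoequalizerOfIsSplitPair (coyoneda.obj (op G)) :=
    ⟨fun f g _ => inferInstance⟩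
  haveI h2 : Monad.PreservesColimitOfIsSplitPair (coyoneda.obj (op G)) :=
    ⟨fun {A B} f g hsp => (hproj A B f g hsp).some⟩
  haveI hmra : MonadicRightAdjoint (coyoneda.obj (op G)) :=
    Monad.monadicOfHasPreservesGSplitCoequalizersOfReflectsIsomorphisms (copowAdj G)
  refine ⟨(monadicAdjunction (coyoneda.obj (op G))).toMonad, ?_, ?_⟩
  · intro C _ hC
    haveI := (monadicAdjunction (coyoneda.obj (op G))).leftAdjoint_preservesColimits
    haveI := (hpres C hC).some
    have : PreservesColimitsOfShape C
        (monadicLeftAdjoint (coyoneda.obj (op G)) ⋙ coyoneda.obj (op G)) := inferInstance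
    exact ⟨this⟩
  · exact ⟨(Monad.comparison (monadicAdjunction (coyoneda.obj (op G)))).asEquivalence⟩

theorem backward_direction (D : Set Cat.{0,0}) {K : Type u} [Category.{0} K]
    (h : IsDAryMonadic D K) : HasProjectiveDPresentableGenerator D K := by
  obtain ⟨T, hT, ⟨e⟩⟩ := h
  haveI : HasColimits T.Algebra := hasColimits_algebra T
  haveI hK : HasColimits K := Adjunction.has_colimits_of_equivalence e.functor
  refine ⟨hK, e.inverse.obj (T.free.obj PUnit), ?_, ?_, ?_⟩
  · rw [isStrongGenerator_singleton_iff]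
    haveI : (e.functor ⋙ T.forget).ReflectsIsomorphisms := inferInstance
    exact reflectsIsos_of_natIso (genIso e)
  · intro C _ hC
    haveI : PreservesColimitsOfShape C T.toFunctor := (hT C hC).some
    haveI : PreservesColimitsOfShape C (Monad.forget T) :=
      preservesColimitOfShape_of_createsColimitsOfShape_and_hasColimitsOfShape _
    haveI : PreservesColimitsOfShape C (e.functor ⋙ Monad.forget T) := inferInstance
    exact ⟨preservesColimitsOfShape_of_natIso (genIso e).symm⟩
  · intro A B f g hsp
    haveI : (Monad.forget T).IsSplitPair (e.functor.map f) (e.functor.map g) :=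
      hasSplitCoequalizer_of_natIso (genIso e) f g hsp
    haveI : CreatesColimit (parallelPair (e.functor.map f) (e.functor.map g))
        (Monad.forget T) :=
      Monad.createsGSplitCoequalizersOfMonadic (Monad.forget T) _ _
    haveI : PreservesColimit (parallelPair (e.functor.map f) (e.functor.map g))
        (Monad.forget T) :=
      preservesColimit_of_createsColimit_and_hasColimit _ _
    haveI : PreservesColimit (parallelPair
        ((parallelPair f g ⋙ e.functor).map WalkingParallelPairHom.left)
        ((parallelPair f g ⋙ e.functor).map WalkingParallelPairHom.right)) (Monad.forget T) :=
      ‹PreservesColimit (parallelPair (e.functor.map f) (e.functor.map g)) (Monad.forget T)›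
    haveI : PreservesColimit (parallelPair f g ⋙ e.functor) (Monad.forget T) :=
      preservesColimit_of_iso_diagram _ (diagramIsoParallelPair _).symm
    haveI : PreservesColimit (parallelPair f g) (e.functor ⋙ Monad.forget T) :=
      inferInstance
    exact ⟨preservesColimit_of_natIso _ (genIso e).symm⟩

/-- For a weakly sound class `D`, a category `K` is equivalent to the
category of algebras of a monad on `Type` preserving colimits of all `D`-filtered shapes
iff `K` is cocomplete with a `D`-presentable projective strong generator; moreover in that
case `K` is locally `D`-presentable. -/

theorem monadic_characterization (D : Set Cat.{0,0}) (hD : WeaklySound D)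
    (K : Type u) [Category.{0} K] :
    (IsDAryMonadic D K ↔ HasProjectiveDPresentableGenerator D K) ∧
    (IsDAryMonadic D K → LocallyDPresentable D K) := by
  refine ⟨⟨backward_direction D, forward_direction D⟩, ?_⟩
  intro h
  obtain ⟨hc, G, hsg, hpres, -⟩ := backward_direction D h
  haveI : Subsingleton (↥({G} : Set K)) :=
    ⟨fun a b => Subtype.ext (a.2.trans b.2.symm)⟩
  refine ⟨hc, {G}, small_subsingleton _, ?_, hsg⟩
  intro X hX
  obtain rfl : X = G := hX
  exact hpres

end Paper
end
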